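/- arXiv:1108.5364 — 2 statements merged into one kernel-verified Lean document; each statement's English description precedes it below -/
import Mathlib

section
/- Let α > 0, σ_θ, θ₀, and y₀ be real numbers, and let f(t) = (σ_θ²/(2α))·(1 - exp(-2α t)) + θ₀²·exp(-2α t). If g : ℝ → ℝ is differentiable with g'(t) = -2α·g(t) + α·f(t) for all t ≥ 0 and g(0) = y₀·θ₀, then g(t) = σ_θ²/(4α) + (y₀θ₀ - σ_θ²/(4α))·exp(-2α t) + (θ₀²·α - σ_θ²/2)·t·exp(-2α t) for all t ≥ 0. (This is the cross-moment formula E[y_t θ_t], Lemma 2.4.) -/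
/-- Cross-moment formula `E[y_t θ_t]` (Lemma 2.4): if `g` is differentiable with
`g' t = -2α g t + α f t` for `t ≥ 0`, where
`f t = (σθ^2/(2α))(1 - exp(-2αt)) + θ₀^2 exp(-2αt)`, and `g 0 = y₀ θ₀`, then
`g t = σθ^2/(4α) + (y₀θ₀ - σθ^2/(4α)) exp(-2αt) + (θ₀^2 α - σθ^2/2) t exp(-2αt)`. -/
theorem ou_cross_moment (α σθ θ₀ y₀ : ℝ) (hα : 0 < α)
    (f : ℝ → ℝ)
    (hfdef : ∀ t, f t = (σθ ^ 2 / (2 * α)) * (1 - Real.exp (-2 * α * t))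
        + θ₀ ^ 2 * Real.exp (-2 * α * t))
    (g : ℝ → ℝ) (hg : Differentiable ℝ g)
    (hode : ∀ t, 0 ≤ t → deriv g t = -2 * α * g t + α * f t)
    (h0 : g 0 = y₀ * θ₀) :
    ∀ t, 0 ≤ t →
      g t = σθ ^ 2 / (4 * α)
        + (y₀ * θ₀ - σθ ^ 2 / (4 * α)) * Real.exp (-2 * α * t)
        + (θ₀ ^ 2 * α - σθ ^ 2 / 2) * t * Real.exp (-2 * α * t) := by
  intro t ht
  set ψ : ℝ → ℝ := fun s => g s * Real.exp (2 * α * s)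
      - σθ ^ 2 / (4 * α) * Real.exp (2 * α * s) - (θ₀ ^ 2 * α - σθ ^ 2 / 2) * s with hψ
  have hderiv : ∀ s ∈ Set.Ico (0:ℝ) t, HasDerivWithinAt ψ 0 (Set.Ici s) s := by
    intro s hs
    have hs0 : (0:ℝ) ≤ s := hs.1
    have hexp : HasDerivAt (fun u : ℝ => Real.exp (2 * α * u))
        (Real.exp (2 * α * s) * (2 * α)) s := by
      simpa using (((hasDerivAt_id s).const_mul (2 * α)).exp)
    have hgd : HasDerivAt g (deriv g s) s := (hg s).hasDerivAt
    have hA : HasDerivAt ψ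
        ((deriv g s * Real.exp (2 * α * s) + g s * (Real.exp (2 * α * s) * (2 * α)))
          - σθ ^ 2 / (4 * α) * (Real.exp (2 * α * s) * (2 * α))
          - (θ₀ ^ 2 * α - σθ ^ 2 / 2)) s := by
      exact ((hgd.mul hexp).sub (hexp.const_mul (σθ ^ 2 / (4 * α)))).sub
        (by simpa using (hasDerivAt_id s).const_mul (θ₀ ^ 2 * α - σθ ^ 2 / 2))
    have hEe : Real.exp (-2 * α * s) * Real.exp (2 * α * s) = 1 := by
      rw [← Real.exp_add]; ring_nf; exact Real.exp_zero
    have h0' : (deriv g s * Real.exp (2 * α * s) + g s * (Real.exp (2 * α * s) * (2 * α)))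
          - σθ ^ 2 / (4 * α) * (Real.exp (2 * α * s) * (2 * α))
          - (θ₀ ^ 2 * α - σθ ^ 2 / 2) = 0 := by
      have hneg : Real.exp (-2 * α * s) = (Real.exp (2 * α * s))⁻¹ := by
        rw [show (-2 * α * s) = -(2 * α * s) by ring, Real.exp_neg]
      rw [hode s hs0, hfdef s, hneg]
      have hE : Real.exp (2 * α * s) ≠ 0 := (Real.exp_pos _).ne'
      field_simp
      ring
    rw [h0'] at hA
    exact hA.hasDerivWithinAt
  have hcont : ContinuousOn ψ (Set.Icc 0 t) := by
    apply Continuous.continuousOn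
    have hgc : Continuous g := hg.continuous
    rw [hψ]
    fun_prop
  have hconst := constant_of_has_deriv_right_zero hcont hderiv t (Set.right_mem_Icc.mpr ht)
  have hψ0 : ψ 0 = y₀ * θ₀ - σθ ^ 2 / (4 * α) := by
    simp [hψ, h0]
  rw [hψ0] at hconst
  have hEe : Real.exp (-2 * α * t) * Real.exp (2 * α * t) = 1 := by
    rw [← Real.exp_add]; ring_nf; exact Real.exp_zero
  have hψt : ψ t = g t * Real.exp (2 * α * t)
      - σθ ^ 2 / (4 * α) * Real.exp (2 * α * t) - (θ₀ ^ 2 * α - σθ ^ 2 / 2) * t := rfl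
  rw [hψt] at hconst
  have hE : Real.exp (2 * α * t) ≠ 0 := (Real.exp_pos _).ne'
  linear_combination Real.exp (-2 * α * t) * hconst - (g t - σθ ^ 2 / (4 * α)) * hEe
end

section
/- Let α > 0, σ_θ, σ_y, θ₀, and y₀ be real numbers, and let g(t) = σ_θ²/(4α) + (y₀θ₀ - σ_θ²/(4α))·exp(-2α t) + (θ₀²·α - σ_θ²/2)·t·exp(-2α t). If h : ℝ → ℝ is differentiable with h'(t) = σ_y² - 2α·h(t) + 2α·g(t) for all t ≥ 0 and h(0) = y₀², then for all t ≥ 0: h(t) = (σ_y²/(2α) + σ_θ²/(4α)) + (α²θ₀² - ασ_θ²/2)·t²·exp(-2α t) + (2α y₀θ₀ - σ_θ²/2)·t·exp(-2α t) + (y₀² - σ_y²/(2α) - σ_θ²/(4α))·exp(-2α t). (This is the second-moment formula E[y_t²] for the trait process, Lemma 2.5, eq. (y2).) -/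
/-- Second-moment formula for the trait process (Lemma 2.5, eq. (y2)):
if `h` is differentiable with `h' t = σy^2 - 2α h t + 2α g t` for `t ≥ 0`, where
`g` is the stated cross-moment function, and `h 0 = y₀^2`, then `h` equals the
closed-form expression for `E[y_t²]`. -/
theorem trait_second_moment (α σθ σy θ₀ y₀ : ℝ) (hα : 0 < α)
    (g : ℝ → ℝ)
    (hgdef : ∀ t, g t = σθ ^ 2 / (4 * α)
        + (y₀ * θ₀ - σθ ^ 2 / (4 * α)) * Real.exp (-2 * α * t)
        + (θ₀ ^ 2 * α - σθ ^ 2 / 2) * t * Real.exp (-2 * α * t))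
    (h : ℝ → ℝ) (hh : Differentiable ℝ h)
    (hode : ∀ t, 0 ≤ t → deriv h t = σy ^ 2 - 2 * α * h t + 2 * α * g t)
    (h0 : h 0 = y₀ ^ 2) :
    ∀ t, 0 ≤ t →
      h t = (σy ^ 2 / (2 * α) + σθ ^ 2 / (4 * α))
        + (α ^ 2 * θ₀ ^ 2 - α * σθ ^ 2 / 2) * t ^ 2 * Real.exp (-2 * α * t)
        + (2 * α * y₀ * θ₀ - σθ ^ 2 / 2) * t * Real.exp (-2 * α * t)
        + (y₀ ^ 2 - σy ^ 2 / (2 * α) - σθ ^ 2 / (4 * α)) * Real.exp (-2 * α * t) := by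
  have hαne : α ≠ 0 := hα.ne'
  set C : ℝ := σy ^ 2 / (2 * α) + σθ ^ 2 / (4 * α) with hC
  set A : ℝ := α ^ 2 * θ₀ ^ 2 - α * σθ ^ 2 / 2 with hA
  set B : ℝ := 2 * α * y₀ * θ₀ - σθ ^ 2 / 2 with hB
  set F : ℝ → ℝ := fun t => h t * Real.exp (2 * α * t)
      - C * Real.exp (2 * α * t) - A * t ^ 2 - B * t with hF
  have hFd : ∀ x, 0 ≤ x → HasDerivAt F 0 x := by
    intro x hx
    have hlin : HasDerivAt (fun t : ℝ => 2 * α * t) (2 * α) x := by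
      simpa using (hasDerivAt_id x).const_mul (2 * α)
    have hE : HasDerivAt (fun t : ℝ => Real.exp (2 * α * t))
        (Real.exp (2 * α * x) * (2 * α)) x := hlin.exp
    have hhx : HasDerivAt h (deriv h x) x := (hh x).hasDerivAt
    have h1 : HasDerivAt (fun t => h t * Real.exp (2 * α * t))
        (deriv h x * Real.exp (2 * α * x) + h x * (Real.exp (2 * α * x) * (2 * α))) x :=
      hhx.mul hE
    have h2 : HasDerivAt (fun t => C * Real.exp (2 * α * t))
        (C * (Real.exp (2 * α * x) * (2 * α))) x := hE.const_mul C
    have h3 : HasDerivAt (fun t : ℝ => A * t ^ 2) (A * (2 * x)) x := by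
      simpa using ((hasDerivAt_pow 2 x).const_mul A)
    have h4 : HasDerivAt (fun t : ℝ => B * t) B x := by
      simpa using (hasDerivAt_id x).const_mul B
    have hsum := ((h1.sub h2).sub h3).sub h4
    have hneg : Real.exp (-2 * α * x) = (Real.exp (2 * α * x))⁻¹ := by
      rw [← Real.exp_neg]; congr 1; ring
    have hEx : Real.exp (2 * α * x) ≠ 0 := (Real.exp_pos _).ne'
    have key : deriv h x * Real.exp (2 * α * x) + h x * (Real.exp (2 * α * x) * (2 * α))
        - C * (Real.exp (2 * α * x) * (2 * α)) - A * (2 * x) - B = 0 := by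
      rw [hode x hx, hgdef x, hC, hA, hB, hneg]
      field_simp
      ring
    rw [key] at hsum; exact hsum
  intro t ht
  have hFt : F t = F 0 := by
    have := eq_of_has_deriv_right_eq (a := (0:ℝ)) (b := t)
      (f := F) (f' := fun _ => (0:ℝ)) (g := fun _ => F 0)
      (fun x hx => (hFd x hx.1).hasDerivWithinAt)
      (fun x _ => (hasDerivAt_const x (F 0)).hasDerivWithinAt)
      (fun x hx => ((hFd x hx.1).continuousAt.continuousWithinAt))
      (continuousOn_const) rfl
    exact this t ⟨ht, le_refl t⟩
  have hEt : Real.exp (2 * α * t) ≠ 0 := (Real.exp_pos _).ne'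
  have hneg : Real.exp (-2 * α * t) = (Real.exp (2 * α * t))⁻¹ := by
    rw [← Real.exp_neg]; congr 1; ring
  have hF0 : F 0 = y₀ ^ 2 - C := by simp [hF, h0]
  rw [hF0] at hFt
  have hkey : h t * Real.exp (2 * α * t) =
      C * Real.exp (2 * α * t) + A * t ^ 2 + B * t + (y₀ ^ 2 - C) := by
    simp only [hF] at hFt; linarith
  have hht : h t = (C * Real.exp (2 * α * t) + A * t ^ 2 + B * t + (y₀ ^ 2 - C))
      / Real.exp (2 * α * t) := by
    rw [eq_div_iff hEt]; exact hkey
  rw [hht, hneg, hC, hA, hB]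
  field_simp
  ring
end
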